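/- The formal power series F(x) = ∑_{i≥1} (-1)^{i-1} · 2((i-1)!)²/(2i)! · x^i over ℚ satisfies the differential equation x(x+4)F''(x) + (x+2)F'(x) − 2 = 0, where F' and F'' denote formal derivatives. -/

import Mathlib

open PowerSeries

/-- `F(x) = ∑_{i≥1} (-1)^{i-1} · 2((i-1)!)²/(2i)! · xⁱ`. -/
noncomputable def Fseries : PowerSeries ℚ :=
  PowerSeries.mk fun i =>
    if i = 0 then 0
    else (-1 : ℚ) ^ (i - 1) * (2 * ((i - 1).factorial : ℚ) ^ 2 / ((2 * i).factorial : ℚ))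

lemma key (m : ℕ) :
    ((m:ℚ)+1)^2 * ((-1:ℚ)^m * (2 * (m.factorial:ℚ)^2 / ((2*(m+1)).factorial:ℚ)))
      + (2*((m:ℚ)+2)*(2*(m:ℚ)+3)) *
        ((-1:ℚ)^(m+1) * (2 * ((m+1).factorial:ℚ)^2 / ((2*(m+2)).factorial:ℚ))) = 0 := by
  have h1 : 2*(m+2) = (2*(m+1)+1)+1 := by ring
  rw [h1, Nat.factorial_succ, Nat.factorial_succ, Nat.factorial_succ]
  have h2 : ((2*(m+1)).factorial : ℚ) ≠ 0 := by
    exact_mod_cast (Nat.factorial_pos _).ne'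
  push_cast
  field_simp
  ring

set_option linter.deprecated false in
theorem coeff_derivativeFun' (f : ℚ⟦X⟧) (n : ℕ) :
    coeff n f.derivativeFun = coeff (n + 1) f * (n + 1) :=
  coeff_derivative f n

theorem Fseries_ODE :
    PowerSeries.X * (PowerSeries.X + 4) * Fseries.derivativeFun.derivativeFun +
        (PowerSeries.X + 2) * Fseries.derivativeFun - 2 = 0 := by
  set G := Fseries.derivativeFun.derivativeFun with hG
  set F' := Fseries.derivativeFun with hF
  have h4 : (4 : ℚ⟦X⟧) = C 4 := (map_ofNat _ _).symm
  have h2 : (2 : ℚ⟦X⟧) = C 2 := (map_ofNat _ _).symm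
  have hexp : X * (X + 4) * G + (X + 2) * F' - 2
      = X * (X * G) + C 4 * (X * G) + X * F' + C 2 * F' - C 2 := by
    rw [← h4, ← h2]; ring
  rw [hexp]
  ext n
  simp only [map_sub, map_add, coeff_C_mul, coeff_C, map_zero]
  rcases n with _ | n
  · simp [coeff_zero_X_mul, hF, coeff_derivativeFun', Fseries, coeff_mk]
  · simp only [coeff_succ_X_mul, Nat.succ_ne_zero, if_neg (Nat.succ_ne_zero n)]
    have hGc : ∀ k, coeff k G = coeff (k+2) Fseries * (k+1) * (k+2) := by
      intro k
      rw [hG, coeff_derivativeFun', coeff_derivativeFun']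
      push_cast; ring
    have hFc : ∀ k, coeff k F' = coeff (k+1) Fseries * (k+1) := by
      intro k; rw [hF, coeff_derivativeFun']
    rcases n with _ | m
    · -- n = 1
      simp only [coeff_zero_X_mul, hGc, hFc, Fseries, coeff_mk]
      norm_num
    · -- n = m + 2
      rw [coeff_succ_X_mul, hGc, hGc, hFc, hFc]
      simp only [Fseries, coeff_mk, if_neg (Nat.succ_ne_zero _)]
      have hk := key (m+1)
      push_cast at hk ⊢
      simp only [show m+1+1+2-1 = m+3 from rfl, show m+1+2-1 = m+2 from rfl, show m+1+1+1 = m+3 from rfl]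
      nlinarith [hk]
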